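/- Let a₁, a₂, a₃, a₄, a₅ ∈ ℂ be all nonzero and α, β, γ ∈ ℂ. If all nine quadrics Q₀, Q₁, Q₂, Q₀′, Q₁′, Q₂′, Q₀″, Q₁″, Q₂″ vanish at the point (x₀,…,x₅) = (0, a₁, a₂, a₃, a₄, a₅), then α ≠ 0, β ≠ 0, 1/α + 1/β = −2a₅a₁/a₃², α + β = −2a₁²/(a₃a₅) = −2a₅²/(a₁a₃), and αβ = a₁a₃/a₅². -/
import Mathlib


open MvPolynomial

noncomputable section

abbrev R6 : Type := MvPolynomial (Fin 6) ℂ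

def Q0 (α : ℂ) : R6 := X 0 ^ 2 + X 3 ^ 2 + C α * (X 2 * X 4 + X 5 * X 1)
def Q1 (α : ℂ) : R6 := X 1 ^ 2 + X 4 ^ 2 + C α * (X 3 * X 5 + X 0 * X 2)
def Q2 (α : ℂ) : R6 := X 2 ^ 2 + X 5 ^ 2 + C α * (X 4 * X 0 + X 1 * X 3)
def Q0' (β : ℂ) : R6 := X 0 ^ 2 - X 3 ^ 2 + C β * (X 2 * X 4 - X 5 * X 1)
def Q1' (β : ℂ) : R6 := X 1 ^ 2 - X 4 ^ 2 + C β * (X 3 * X 5 - X 0 * X 2)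
def Q2' (β : ℂ) : R6 := X 2 ^ 2 - X 5 ^ 2 + C β * (X 4 * X 0 - X 1 * X 3)
def Q0'' (γ : ℂ) : R6 := X 0 * X 1 + X 3 * X 4 + C γ * (X 2 * X 5)
def Q1'' (γ : ℂ) : R6 := X 1 * X 2 + X 4 * X 5 + C γ * (X 3 * X 0)
def Q2'' (γ : ℂ) : R6 := X 2 * X 3 + X 5 * X 0 + C γ * (X 4 * X 1)

/-- If the nine quadrics all vanish at `(0, a₁, a₂, a₃, a₄, a₅)` with all `aᵢ ≠ 0`, then
`α ≠ 0`, `β ≠ 0`, `1/α + 1/β = −2a₅a₁/a₃²`, `α + β = −2a₁²/(a₃a₅) = −2a₅²/(a₁a₃)` and `αβ = a₁a₃/a₅²`. -/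
theorem intermediate_relations (a₁ a₂ a₃ a₄ a₅ : ℂ)
    (h₁ : a₁ ≠ 0) (h₂ : a₂ ≠ 0) (h₃ : a₃ ≠ 0) (h₄ : a₄ ≠ 0) (h₅ : a₅ ≠ 0)
    (α β γ : ℂ)
    (hQ0 : eval ![0, a₁, a₂, a₃, a₄, a₅] (Q0 α) = 0)
    (hQ1 : eval ![0, a₁, a₂, a₃, a₄, a₅] (Q1 α) = 0)
    (hQ2 : eval ![0, a₁, a₂, a₃, a₄, a₅] (Q2 α) = 0)
    (hQ0' : eval ![0, a₁, a₂, a₃, a₄, a₅] (Q0' β) = 0)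
    (hQ1' : eval ![0, a₁, a₂, a₃, a₄, a₅] (Q1' β) = 0)
    (hQ2' : eval ![0, a₁, a₂, a₃, a₄, a₅] (Q2' β) = 0)
    (hQ0'' : eval ![0, a₁, a₂, a₃, a₄, a₅] (Q0'' γ) = 0)
    (hQ1'' : eval ![0, a₁, a₂, a₃, a₄, a₅] (Q1'' γ) = 0)
    (hQ2'' : eval ![0, a₁, a₂, a₃, a₄, a₅] (Q2'' γ) = 0) :
    α ≠ 0 ∧ β ≠ 0 ∧
    1 / α + 1 / β = -(2 * a₅ * a₁) / a₃ ^ 2 ∧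
    α + β = -(2 * a₁ ^ 2) / (a₃ * a₅) ∧
    α + β = -(2 * a₅ ^ 2) / (a₁ * a₃) ∧
    α * β = a₁ * a₃ / a₅ ^ 2 := by

  simp only [Q0, Q1, Q2, Q0', Q1', Q2', Q0'', Q1'', Q2'', eval_add, eval_sub, eval_mul, eval_pow,
    eval_X, eval_C, Matrix.cons_val_zero, Matrix.cons_val_one, Matrix.head_cons,
    Matrix.cons_val_two, Matrix.tail_cons, Matrix.cons_val_three, Matrix.cons_val_four,
    Matrix.cons_val_fin_one] at hQ0 hQ1 hQ2 hQ0' hQ1' hQ2' hQ0'' hQ1'' hQ2''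
  rw [show (![(0:ℂ), a₁, a₂, a₃, a₄, a₅] : Fin 6 → ℂ) 5 = a₅ from rfl]
    at hQ0 hQ1 hQ2 hQ0' hQ1' hQ2' hQ0'' hQ1'' hQ2''
  -- clean scalar equations
  have e1 : a₃ ^ 2 + α * (a₂ * a₄ + a₅ * a₁) = 0 := by linear_combination hQ0
  have e2 : a₁ ^ 2 + a₄ ^ 2 + α * (a₃ * a₅) = 0 := by linear_combination hQ1
  have e3 : a₂ ^ 2 + a₅ ^ 2 + α * (a₁ * a₃) = 0 := by linear_combination hQ2
  have e4 : -a₃ ^ 2 + β * (a₂ * a₄ - a₅ * a₁) = 0 := by linear_combination hQ0'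
  have e5 : a₁ ^ 2 - a₄ ^ 2 + β * (a₃ * a₅) = 0 := by linear_combination hQ1'
  have e6 : a₂ ^ 2 - a₅ ^ 2 - β * (a₁ * a₃) = 0 := by linear_combination hQ2'
  have e7 : a₃ * a₄ + γ * (a₂ * a₅) = 0 := by linear_combination hQ0''
  have e8 : a₁ * a₂ + a₄ * a₅ = 0 := by linear_combination hQ1''
  have e9 : a₂ * a₃ + γ * (a₄ * a₁) = 0 := by linear_combination hQ2''
  have hα : α ≠ 0 := by
    intro h
    apply h₃
    have : a₃ ^ 2 = 0 := by rw [h] at e1; linear_combination e1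
    exact pow_eq_zero_iff (by norm_num) |>.mp this
  have hβ : β ≠ 0 := by
    intro h
    apply h₃
    have : a₃ ^ 2 = 0 := by rw [h] at e4; linear_combination -e4
    exact pow_eq_zero_iff (by norm_num) |>.mp this
  have hγ : γ ≠ 0 := by
    intro h
    rw [h] at e7
    have : a₃ * a₄ = 0 := by linear_combination e7
    rcases mul_eq_zero.mp this with h' | h'
    · exact h₃ h'
    · exact h₄ h'
  have F3 : a₂ ^ 2 * a₅ = a₁ * a₄ ^ 2 :=
    mul_left_cancel₀ hγ (by linear_combination a₂ * e7 - a₄ * e9)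
  have F1 : a₁ ^ 3 = a₅ ^ 3 := by
    have h : a₁ ^ 3 * a₄ ^ 2 = a₅ ^ 3 * a₄ ^ 2 := by
      linear_combination -a₁ ^ 2 * F3 + a₅ * (a₁ * a₂ - a₄ * a₅) * e8
    exact mul_right_cancel₀ (pow_ne_zero 2 h₄) h
  have hs : (α + β) * (a₃ * a₅) = -2 * a₁ ^ 2 := by linear_combination e2 + e5
  have hd : (α - β) * (a₃ * a₅) = -2 * a₄ ^ 2 := by linear_combination e2 - e5
  have F2 : a₃ ^ 3 * a₅ = a₂ * a₄ ^ 3 + a₁ ^ 3 * a₅ := by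
    linear_combination (a₃ * a₅ / 2) * e1 - (a₃ * a₅ / 2) * e4 - (a₂ * a₄ / 2) * hd -
      (a₁ * a₅ / 2) * hs
  -- a₁ * a₃ ^ 3 = a₁ ^ 4 - a₄ ^ 4
  have F4 : a₁ * a₃ ^ 3 = a₁ ^ 4 - a₄ ^ 4 := by
    have h : a₁ * a₃ ^ 3 * a₅ = (a₁ ^ 4 - a₄ ^ 4) * a₅ := by
      linear_combination a₁ * F2 + a₄ ^ 3 * e8
    exact mul_right_cancel₀ h₅ h
  have hp : α * β * a₅ ^ 2 = a₁ * a₃ := by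
    have h : α * β * a₅ ^ 2 * a₃ ^ 2 = a₁ * a₃ * a₃ ^ 2 := by
      linear_combination β * a₃ * a₅ * e2 - (a₁ ^ 2 + a₄ ^ 2) * e5 - F4
    exact mul_right_cancel₀ (pow_ne_zero 2 h₃) h
  have hs2 : (α + β) * (a₁ * a₃) = -2 * a₅ ^ 2 := by linear_combination e3 - e6
  have hC : (α + β) * a₃ ^ 2 = -(2 * a₅ * a₁) * (α * β) := by
    have h : (α + β) * a₃ ^ 2 * (a₃ * a₅ ^ 2) = -(2 * a₅ * a₁) * (α * β) * (a₃ * a₅ ^ 2) := by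
      linear_combination a₃ ^ 2 * a₅ * hs + 2 * a₁ * a₃ * a₅ * hp
    exact mul_right_cancel₀ (mul_ne_zero h₃ (pow_ne_zero 2 h₅)) h
  refine ⟨hα, hβ, ?_, ?_, ?_, ?_⟩
  · field_simp
    linear_combination hC
  · field_simp
    linear_combination hs
  · field_simp
    linear_combination hs2
  · field_simp
    linear_combination hp
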